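/- For $\varepsilon \in [0,1]$ define $\tilde{c}(\varepsilon) := \sup\{c > 0 : \inf_{y \in \mathbb{R}} e^{y^2/c}(1 - \varepsilon \sin^2 y) = 1\}$. Then for all $\varepsilon \in (0,1)$: $-1/\ln(1-\varepsilon) \le \tilde{c}(\varepsilon) \le \min\{-\pi^2/(4\ln(1-\varepsilon)),\ 1/\varepsilon\}$. -/

import Mathlib

/-- `c̃(ε)`, the supremum of those `c > 0` for which
`inf_y e^{y²/c}(1 - ε sin² y) = 1`. -/
noncomputable def ctilde (ε : ℝ) : ℝ :=
  sSup {c : ℝ | 0 < c ∧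
    sInf (Set.range fun y : ℝ => Real.exp (y ^ 2 / c) * (1 - ε * Real.sin y ^ 2)) = 1}

theorem stmt_17 (ε : ℝ) (hε0 : 0 < ε) (hε1 : ε < 1) :
    -1 / Real.log (1 - ε) ≤ ctilde ε ∧
      ctilde ε ≤ min (-(Real.pi ^ 2) / (4 * Real.log (1 - ε))) (1 / ε) := by
  set L : ℝ := -Real.log (1 - ε) with hLdef
  have h1ε : (0:ℝ) < 1 - ε := by linarith
  have hlogneg : Real.log (1 - ε) < 0 := Real.log_neg h1ε (by linarith)
  have hL : 0 < L := by simp only [hLdef]; linarith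
  have hexpL : Real.exp (-L) = 1 - ε := by
    simp [hLdef, Real.exp_log h1ε]
  set S : Set ℝ := {c : ℝ | 0 < c ∧
    sInf (Set.range fun y : ℝ => Real.exp (y ^ 2 / c) * (1 - ε * Real.sin y ^ 2)) = 1}
    with hSdef
  -- convexity: for α ∈ [0,1], exp(-α L) ≤ 1 - ε α
  have key : ∀ α : ℝ, 0 ≤ α → α ≤ 1 → Real.exp (-(α * L)) ≤ 1 - ε * α := by
    intro α h0 h1
    have := convexOn_exp.2 (Set.mem_univ (0:ℝ)) (Set.mem_univ (-L))
      (by linarith : (0:ℝ) ≤ 1 - α) h0 (by ring)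
    simp only [smul_eq_mul, Real.exp_zero] at this
    calc Real.exp (-(α * L)) = Real.exp ((1-α) * 0 + α * (-L)) := by ring_nf
      _ ≤ (1-α) * 1 + α * Real.exp (-L) := this
      _ = 1 - ε * α := by rw [hexpL]; ring
  -- membership of c₀ = 1/L
  have hc0 : -1 / Real.log (1 - ε) = 1 / L := by
    rw [hLdef]; ring
  have hmem : (1 / L) ∈ S := by
    constructor
    · positivity
    · have hge : ∀ y : ℝ, 1 ≤ Real.exp (y ^ 2 / (1 / L)) * (1 - ε * Real.sin y ^ 2) := by
        intro y
        have hs0 : (0:ℝ) ≤ Real.sin y ^ 2 := sq_nonneg _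
        have hs1 : Real.sin y ^ 2 ≤ 1 := Real.sin_sq_le_one y
        have h2 := key _ hs0 hs1
        have hsy : Real.sin y ^ 2 ≤ y ^ 2 := Real.sin_sq_le_sq
        have hdiv : y ^ 2 / (1 / L) = y ^ 2 * L := by field_simp
        rw [hdiv]
        calc (1:ℝ) = Real.exp (y^2 * L) * Real.exp (-(y^2 * L)) := by
              rw [← Real.exp_add]; simp
          _ ≤ Real.exp (y^2 * L) * Real.exp (-(Real.sin y ^2 * L)) := by
              apply mul_le_mul_of_nonneg_left _ (Real.exp_pos _).le
              apply Real.exp_le_exp.2; nlinarith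
          _ ≤ Real.exp (y^2 * L) * (1 - ε * Real.sin y ^ 2) := by
              apply mul_le_mul_of_nonneg_left h2 (Real.exp_pos _).le
      apply le_antisymm
      · refine csInf_le ⟨1, ?_⟩ ⟨0, by simp⟩
        rintro x ⟨y, rfl⟩; exact hge y
      · exact le_csInf (Set.range_nonempty _) (by rintro x ⟨y, rfl⟩; exact hge y)
  -- upper bound on members
  have hub : ∀ c ∈ S, c ≤ min (-(Real.pi ^ 2) / (4 * Real.log (1 - ε))) (1 / ε) := by
    rintro c ⟨hcpos, hcinf⟩
    set f : ℝ → ℝ := fun y : ℝ => Real.exp (y ^ 2 / c) * (1 - ε * Real.sin y ^ 2) with hf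
    have hbdd : BddBelow (Set.range f) := by
      by_contra h
      rw [Real.sInf_of_not_bddBelow h] at hcinf
      norm_num at hcinf
    have hge : ∀ y : ℝ, 1 ≤ f y := by
      intro y
      rw [← hcinf]
      exact csInf_le hbdd ⟨y, rfl⟩
    have hmin : -(Real.pi ^ 2) / (4 * Real.log (1 - ε)) = Real.pi ^ 2 / (4 * L) := by
      rw [hLdef]; ring
    rw [hmin]
    refine le_min ?_ ?_
    · -- evaluate at π/2
      have h1 := hge (Real.pi / 2)
      simp only [hf, Real.sin_pi_div_two] at h1
      have h2 : (1:ℝ) / (1 - ε) ≤ Real.exp ((Real.pi/2)^2 / c) := by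
        rw [div_le_iff₀ h1ε]; nlinarith [Real.exp_pos ((Real.pi/2)^2 / c)]
      have h3 : L ≤ (Real.pi/2)^2 / c := by
        have := Real.log_le_log (by positivity) h2
        rwa [Real.log_div one_ne_zero (ne_of_gt h1ε), Real.log_one,
          Real.log_exp, zero_sub] at this
      rw [le_div_iff₀ (by positivity)]
      rw [le_div_iff₀ hcpos] at h3
      nlinarith
    · -- c ≤ 1/ε by contradiction
      by_contra h
      push_neg at h
      have hεc : 1 < ε * c := by
        rw [div_lt_iff₀ hε0] at h; linarith
      obtain ⟨δ, hδdef⟩ : ∃ δ : ℝ, δ = 1 - 1 / (ε * c) := ⟨_, rfl⟩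
      have hεc0 : 0 < ε * c := by positivity
      have hδ : 0 < δ := by
        simp only [hδdef]
        have : 1 / (ε * c) < 1 := by rw [div_lt_one hεc0]; exact hεc
        linarith
      obtain ⟨t, htdef⟩ : ∃ t : ℝ, t = min (min (c/2) 1) (2*δ) := ⟨_, rfl⟩
      have ht0 : 0 < t := by
        rw [htdef]; exact lt_min (lt_min (by linarith) one_pos) (by linarith)
      obtain ⟨y, hydef⟩ : ∃ y : ℝ, y = Real.sqrt t := ⟨_, rfl⟩
      have hy0 : 0 < y := hydef ▸ Real.sqrt_pos.2 ht0
      have hy2 : y ^ 2 = t := hydef ▸ Real.sq_sqrt ht0.le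
      have hy1 : y ≤ 1 := by
        rw [hydef, show (1:ℝ) = Real.sqrt 1 by simp]
        exact Real.sqrt_le_sqrt (htdef ▸ le_trans (min_le_left _ _) (min_le_right _ _))
      have htc : t ≤ c / 2 := htdef ▸ le_trans (min_le_left _ _) (min_le_left _ _)
      have htδ : t ≤ 2 * δ := htdef ▸ min_le_right _ _
      -- sin y ≥ y - y^3/4
      have hsin : y - y ^ 3 / 4 ≤ Real.sin y := by
        have := Real.sin_gt_sub_cube hy0; have := pow_pos hy0 3; linarith
      have hsub0 : 0 ≤ y - y ^ 3 / 4 := by nlinarith [sq_nonneg y]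
      have hsinsq : y ^ 2 * (1 - y ^ 2 / 2) ≤ Real.sin y ^ 2 := by
        have hsq : (y - y ^ 3 / 4) ^ 2 ≤ Real.sin y ^ 2 :=
          pow_le_pow_left₀ hsub0 hsin 2
        nlinarith [sq_nonneg (y ^ 3), sq_nonneg y]
      -- ε sin² y ≥ y²/c
      have hkey : y ^ 2 / c ≤ ε * Real.sin y ^ 2 := by
        have h1 : 1 / (ε * c) ≤ 1 - y ^ 2 / 2 := by
          have : y ^ 2 / 2 ≤ δ := by rw [hy2]; linarith
          simp only [hδdef] at this ⊢; linarith
        have h2 : y ^ 2 * (1 / (ε * c)) ≤ y ^ 2 * (1 - y ^ 2 / 2) :=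
          mul_le_mul_of_nonneg_left h1 (sq_nonneg y)
        have h3 : y ^ 2 * (1 / (ε * c)) = y ^ 2 / c / ε := by
          field_simp
        calc y ^ 2 / c = ε * (y ^ 2 / c / ε) := by field_simp
          _ ≤ ε * Real.sin y ^ 2 := by
              apply mul_le_mul_of_nonneg_left _ hε0.le
              calc y ^ 2 / c / ε = y ^ 2 * (1 / (ε * c)) := h3.symm
                _ ≤ y ^ 2 * (1 - y ^ 2 / 2) := h2
                _ ≤ Real.sin y ^ 2 := hsinsq
      -- exp(a)(1-a) < 1 for a = y²/c > 0
      have ha0 : 0 < y ^ 2 / c := by positivity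
      have hexp : Real.exp (y ^ 2 / c) * (1 - y ^ 2 / c) < 1 := by
        have := Real.add_one_lt_exp (x := -(y ^ 2 / c)) (by linarith)
        have h4 : 1 - y ^ 2 / c < Real.exp (-(y ^ 2 / c)) := by linarith
        calc Real.exp (y ^ 2 / c) * (1 - y ^ 2 / c)
            < Real.exp (y ^ 2 / c) * Real.exp (-(y ^ 2 / c)) :=
              mul_lt_mul_of_pos_left h4 (Real.exp_pos _)
          _ = 1 := by rw [← Real.exp_add]; simp
      have : f y < 1 := by
        simp only [hf]
        calc Real.exp (y ^ 2 / c) * (1 - ε * Real.sin y ^ 2)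
            ≤ Real.exp (y ^ 2 / c) * (1 - y ^ 2 / c) := by
              apply mul_le_mul_of_nonneg_left _ (Real.exp_pos _).le
              linarith
          _ < 1 := hexp
      exact absurd (hge y) (not_le.2 this)
  constructor
  · rw [hc0]
    exact le_csSup ⟨_, hub⟩ hmem
  · exact csSup_le ⟨_, hmem⟩ hub
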